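/- There is a bijection between n-cell e-diagrams D and triples (D_beta, lambda, mu), where beta = beta(D) is the classifying signed permutation of D, and lambda, mu are partitions with all parts at most n; moreover under this bijection the weight satisfies |D| = |D_beta| + 2(|lambda|, |mu|), where |D| = (sum of first coordinates, sum of second coordinates). -/

import Mathlib

open scoped Classical

/-- The hyperoctahedral group `B_n`, modeled as pairs (permutation, sign vector),
i.e. the wreath product `ℤ₂ ≀ S_n`.  `β.2 i = true` means the entry at position `i`
is negative. -/
abbrev HO (n : ℕ) := Equiv.Perm (Fin n) × (Fin n → Bool)

namespace HO

/-- The inverse signed permutation. -/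
noncomputable def inv {n : ℕ} (β : HO n) : HO n := (β.1⁻¹, fun i => β.2 (β.1⁻¹ i))

/-- One-line notation (1-indexed): the signed value `β(i) ∈ {±1,…,±n}` for `1 ≤ i ≤ n`,
and `0` outside this range. -/
noncomputable def val {n : ℕ} (β : HO n) (i : ℕ) : ℤ :=
  if h : 1 ≤ i ∧ i ≤ n then
    (if β.2 ⟨i - 1, by omega⟩ then -(((β.1 ⟨i - 1, by omega⟩ : Fin n) : ℕ) + 1 : ℤ)
     else (((β.1 ⟨i - 1, by omega⟩ : Fin n) : ℕ) + 1 : ℤ))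
  else 0

/-- The order `-1 ≺ -2 ≺ ⋯ ≺ -n ≺ ⋯ ≺ 0 ≺ 1 ≺ 2 ≺ ⋯` on `ℤ`:
`bprec a b` means `a ≺ b`. -/
noncomputable def bprec (a b : ℤ) : Prop :=
  (a < 0 ∧ b < 0 ∧ -a < -b) ∨ (a < 0 ∧ 0 ≤ b) ∨ (0 ≤ a ∧ 0 ≤ b ∧ a < b)

/-- Descent set of `β` with respect to the order `≺`. -/
noncomputable def Des {n : ℕ} (β : HO n) : Finset ℕ :=
  (Finset.Icc 1 (n - 1)).filter fun i => bprec (val β (i + 1)) (val β i)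

/-- Rise set of `β` with respect to the order `≺`. -/
noncomputable def Ris {n : ℕ} (β : HO n) : Finset ℕ :=
  (Finset.Icc 1 (n - 1)).filter fun i => bprec (val β i) (val β (i + 1))

/-- Major index. -/
noncomputable def maj {n : ℕ} (β : HO n) : ℕ := ∑ i ∈ Des β, i

/-- Number of negative entries. -/
noncomputable def neg {n : ℕ} (β : HO n) : ℕ :=
  ((Finset.Icc 1 n).filter fun i => val β i < 0).card

/-- The flag-major index `fmaj β = 2 maj β + neg β`. -/
noncomputable def fmaj {n : ℕ} (β : HO n) : ℕ := 2 * maj β + neg β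

/-- `δ_i(β) = #{j ∈ Des(β) : j < i}`. -/
noncomputable def deltaStat {n : ℕ} (β : HO n) (i : ℕ) : ℕ := ((Des β).filter fun j => j < i).card

/-- `d_i(β) = #{j ∈ Des(β) : j ≥ i}`. -/
noncomputable def dStat {n : ℕ} (β : HO n) (i : ℕ) : ℕ := ((Des β).filter fun j => i ≤ j).card

/-- `ε_i(β) = 1` if `β(i) < 0`, else `0`. -/
noncomputable def epsStat {n : ℕ} (β : HO n) (i : ℕ) : ℕ := if val β i < 0 then 1 else 0

/-- `η_i(β) = 1` if `β(i) > 0`, else `0`. -/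
noncomputable def etaStat {n : ℕ} (β : HO n) (i : ℕ) : ℕ := if 0 < val β i then 1 else 0

/-- `g_i(β) = 2 δ_i(β) + η_i(β)`. -/
noncomputable def gstat {n : ℕ} (β : HO n) (i : ℕ) : ℕ := 2 * deltaStat β i + etaStat β i

/-- `f_i(β) = 2 d_i(β) + ε_i(β)` (so that `fmaj β = ∑ f_i(β)`). -/
noncomputable def fStat {n : ℕ} (β : HO n) (i : ℕ) : ℕ := 2 * dStat β i + epsStat β i

/-- `μ_i(β) = #{k ∈ Ris(β⁻¹) : k < i}`. -/
noncomputable def muStat {n : ℕ} (β : HO n) (i : ℕ) : ℕ := ((Ris (inv β)).filter fun k => k < i).card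

/-- `ĝ_i(β) = 2 μ_{σ(i)}(β) + ε_i(β)`, where `σ(i) = |β(i)|`. -/
noncomputable def ghat {n : ℕ} (β : HO n) (i : ℕ) : ℕ :=
  2 * muStat β (val β i).natAbs + epsStat β i

end HO

/-- The key used for the labelling (opposite-lexicographic) order on the cells of a
diagram `D : Fin n → ℕ × ℕ`: compare `b`, then `a`, then the index (to break ties). -/
noncomputable def okey {n : ℕ} (D : Fin n → ℕ × ℕ) (i : Fin n) : ℕ ×ₗ (ℕ ×ₗ ℕ) :=
  toLex ((D i).2, toLex ((D i).1, (i : ℕ)))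

/-- The label of the `i`-th cell of `D` (cells listed in reading = lex order):
its rank in the opposite-lexicographic labelling order. -/
noncomputable def labelOf {n : ℕ} (D : Fin n → ℕ × ℕ) (i : Fin n) : ℕ :=
  (Finset.univ.filter fun j : Fin n => okey D j ≤ okey D i).card

/-- The value at `i` of the classifying signed permutation `β(D)` of a diagram `D`
whose cells are listed in lex (reading) order: `β(D)(i) = (-1)^{a_i + 1} · label(i)`. -/
noncomputable def classifyVal {n : ℕ} (D : Fin n → ℕ × ℕ) (i : Fin n) : ℤ :=
  (if (D i).1 % 2 = 1 then 1 else -1) * (labelOf D i : ℤ)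

/-- The compact `e`-diagram `D_β = (g(β), g̃(β))`, with cells listed in reading order:
the `i`-th cell is `(g_i(β), g_{σ(i)}(β⁻¹))` where `σ(i) = |β(i)|`. -/
noncomputable def Dbeta {n : ℕ} (β : HO n) (i : Fin n) : ℕ × ℕ :=
  (HO.gstat β ((i : ℕ) + 1), HO.gstat (HO.inv β) (HO.val β ((i : ℕ) + 1)).natAbs)


/-- An `n`-cell `e`-diagram: a multiset of `n` cells `(a,b)` with `a + b` even,
listed in weakly increasing lexicographic (reading) order. -/
noncomputable def EDiag (n : ℕ) : Type :=
  {D : Fin n → ℕ × ℕ // (Monotone fun i => toLex (D i)) ∧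
    ∀ i, ((D i).1 + (D i).2) % 2 = 0}

/-- Partitions with all parts at most `n` (modeled as multisets of parts). -/
noncomputable def PartLE (n : ℕ) : Type :=
  {s : Multiset ℕ // ∀ x ∈ s, 1 ≤ x ∧ x ≤ n}

namespace Aux
open HO
variable {n : ℕ}

lemma val_eq (β : HO n) (i : Fin n) :
    val β ((i:ℕ)+1) = if β.2 i then -((β.1 i : ℤ)+1) else ((β.1 i : ℤ)+1) := by
  have h : 1 ≤ (i:ℕ)+1 ∧ (i:ℕ)+1 ≤ n := ⟨Nat.le_add_left _ _, i.isLt⟩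
  unfold val
  rw [dif_pos h]
  have : (⟨(i:ℕ)+1-1, by omega⟩ : Fin n) = i := by ext; simp
  rw [this]

lemma val_inv_eq (β : HO n) (k : Fin n) :
    val (inv β) ((β.1 k : ℕ)+1)
      = if β.2 k then -((k:ℤ)+1) else ((k:ℤ)+1) := by
  have := val_eq (inv β) (β.1 k)
  simpa [inv] using this

lemma natAbs_val (β : HO n) (i : Fin n) : (val β ((i:ℕ)+1)).natAbs = (β.1 i : ℕ)+1 := by
  rw [val_eq]; split <;> omega

/-- Rewrite a general in-range position as `i+1` for `i : Fin n`. -/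
lemma pos_ex (p : ℕ) (h1 : 1 ≤ p) (h2 : p ≤ n) : ∃ i : Fin n, p = (i:ℕ)+1 := by
  have hlt : p - 1 < n := by omega
  refine ⟨⟨p-1, hlt⟩, ?_⟩
  rw [Fin.val_mk]
  omega

lemma val_ne_zero (β : HO n) (i : Fin n) : val β ((i:ℕ)+1) ≠ 0 := by
  rw [val_eq]; split <;> omega

lemma val_ne_val (β : HO n) {i j : Fin n} (h : i ≠ j) :
    val β ((i:ℕ)+1) ≠ val β ((j:ℕ)+1) := by
  intro he
  have : (val β ((i:ℕ)+1)).natAbs = (val β ((j:ℕ)+1)).natAbs := by rw [he]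
  rw [natAbs_val, natAbs_val] at this
  exact h (β.1.injective (Fin.ext (by omega)))

lemma bprec_total {a b : ℤ} (ha : a ≠ 0) (hb : b ≠ 0) (hne : a ≠ b) :
    bprec a b ∨ bprec b a := by
  unfold bprec; omega

lemma mem_Des_iff (β : HO n) (p : ℕ) :
    p ∈ Des β ↔ (1 ≤ p ∧ p ≤ n - 1) ∧ bprec (val β (p+1)) (val β p) := by
  simp [Des, Finset.mem_filter, Finset.mem_Icc, and_assoc]

lemma deltaStat_one (β : HO n) : deltaStat β 1 = 0 := by
  unfold deltaStat
  rw [Finset.card_eq_zero, Finset.filter_eq_empty_iff]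
  intro j hj
  rw [mem_Des_iff] at hj
  omega

lemma deltaStat_succ (β : HO n) (p : ℕ) :
    deltaStat β (p+1) = deltaStat β p + (if p ∈ Des β then 1 else 0) := by
  unfold deltaStat
  have h : ((Des β).filter fun j => j < p+1)
      = ((Des β).filter fun j => j < p) ∪ ((Des β).filter fun j => j = p) := by
    rw [← Finset.filter_or]; apply Finset.filter_congr; intro x _; constructor <;> omega
  rw [h, Finset.card_union_of_disjoint, Finset.filter_eq']
  · split <;> simp
  · rw [Finset.disjoint_filter]; intro x _ h1 h2; omega

lemma etaStat_eq (β : HO n) (i : Fin n) :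
    etaStat β ((i:ℕ)+1) = if β.2 i then 0 else 1 := by
  unfold etaStat; rw [val_eq]; split <;> simp <;> omega

lemma eta_le_one (β : HO n) (p : ℕ) : etaStat β p ≤ 1 := by
  unfold etaStat; split <;> omega

lemma gstat_parity (β : HO n) (p : ℕ) : gstat β p % 2 = etaStat β p := by
  have := eta_le_one β p
  unfold gstat; omega

lemma gstat_one (β : HO n) : gstat β 1 = etaStat β 1 := by
  unfold gstat; rw [deltaStat_one]; ring

lemma gstat_step (β : HO n) (p : ℕ) :
    gstat β (p+1) + etaStat β p
      = gstat β p + 2 * (if p ∈ Des β then 1 else 0) + etaStat β (p+1) := by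
  unfold gstat; rw [deltaStat_succ]; ring

/-- If `p` is not a descent (both positions in range), then `val β p ≺ val β (p+1)`. -/
lemma bprec_of_not_des (β : HO n) (p : ℕ) (h1 : 1 ≤ p) (h2 : p ≤ n - 1)
    (hd : p ∉ Des β) : bprec (val β p) (val β (p+1)) := by
  obtain ⟨i, hi⟩ := pos_ex (n:=n) p h1 (by omega)
  obtain ⟨j, hj⟩ := pos_ex (n:=n) (p+1) (by omega) (by omega)
  have hij : i ≠ j := by intro h; rw [h] at hi; omega
  have hne : val β p ≠ val β (p+1) := by rw [hj, hi]; exact val_ne_val β hij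
  rcases bprec_total (by rw [hi]; exact val_ne_zero β i) (by rw [hj]; exact val_ne_zero β j)
    hne with h | h
  · exact h
  · exact absurd ((mem_Des_iff β p).2 ⟨⟨h1, h2⟩, h⟩) hd

lemma eta_mono_of_not_des (β : HO n) (p : ℕ) (h1 : 1 ≤ p) (h2 : p ≤ n - 1)
    (hd : p ∉ Des β) : etaStat β p ≤ etaStat β (p+1) := by
  have h := bprec_of_not_des β p h1 h2 hd
  unfold etaStat; unfold bprec at h; split_ifs <;> omega

lemma gstat_le_succ (β : HO n) (p : ℕ) (h1 : 1 ≤ p) (h2 : p ≤ n - 1) :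
    gstat β p ≤ gstat β (p+1) := by
  have hs := gstat_step β p
  by_cases hd : p ∈ Des β
  · have := eta_le_one β p; have := eta_le_one β (p+1); simp [hd] at hs; omega
  · have := eta_mono_of_not_des β p h1 h2 hd; simp [hd] at hs; omega

lemma gstat_mono (β : HO n) {p q : ℕ} (h1 : 1 ≤ p) (hpq : p ≤ q) (h2 : q ≤ n) :
    gstat β p ≤ gstat β q := by
  induction q with
  | zero => omega
  | succ r ih =>
    rcases Nat.lt_or_ge p (r+1) with h | h
    · exact le_trans (ih (by omega) (by omega)) (gstat_le_succ β r (by omega) (by omega))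
    · have : p = r + 1 := by omega
      rw [this]

/-- If `p ∉ Des β` and the signs at `p, p+1` agree, the absolute values increase. -/
lemma abs_lt_of_not_des (β : HO n) (p : ℕ) (h1 : 1 ≤ p) (h2 : p ≤ n - 1)
    (hd : p ∉ Des β) (hs : etaStat β p = etaStat β (p+1)) :
    (val β p).natAbs < (val β (p+1)).natAbs := by
  have h := bprec_of_not_des β p h1 h2 hd
  unfold bprec at h
  unfold etaStat at hs
  obtain ⟨j, hj⟩ := pos_ex (n:=n) (p+1) (by omega) (by omega)
  have hz : val β (p+1) ≠ 0 := by rw [hj]; exact val_ne_zero β j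
  rcases h with ⟨ha,hb,hab⟩|⟨ha,hb⟩|⟨ha,hb,hab⟩
  · have e1 := Int.ofNat_natAbs_of_nonpos (le_of_lt ha)
    have e2 := Int.ofNat_natAbs_of_nonpos (le_of_lt hb)
    omega
  · split_ifs at hs <;> omega
  · have e1 := Int.natAbs_of_nonneg ha
    have e2 := Int.natAbs_of_nonneg hb
    omega

end Aux
namespace Aux
variable {n : ℕ}

lemma okey_injective (D : Fin n → ℕ × ℕ) : Function.Injective (okey D) := by
  intro i j h
  unfold okey at h
  have h1 := toLex.injective h
  have h2 := toLex.injective (congrArg Prod.snd h1)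
  exact Fin.ext (congrArg Prod.snd h2)

lemma label_le_iff (D : Fin n → ℕ × ℕ) (i j : Fin n) :
    labelOf D j ≤ labelOf D i ↔ okey D j ≤ okey D i := by
  constructor
  · intro h
    by_contra hno
    push_neg at hno
    have hlt : okey D i < okey D j := hno
    have hss : (Finset.univ.filter fun k : Fin n => okey D k ≤ okey D i)
        ⊂ (Finset.univ.filter fun k : Fin n => okey D k ≤ okey D j) := by
      constructor
      · intro k hk
        simp only [Finset.mem_filter, Finset.mem_univ, true_and] at hk ⊢
        exact le_trans hk (le_of_lt hlt)
      · intro hsub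
        have hj : j ∈ (Finset.univ.filter fun k : Fin n => okey D k ≤ okey D j) := by
          simp
        have := hsub hj
        simp only [Finset.mem_filter, Finset.mem_univ, true_and] at this
        exact absurd (lt_of_lt_of_le hlt this) (lt_irrefl _)
    have := Finset.card_lt_card hss
    unfold labelOf at h
    omega
  · intro h
    apply Finset.card_le_card
    intro k hk
    simp only [Finset.mem_filter, Finset.mem_univ, true_and] at hk ⊢
    exact le_trans hk h

lemma label_lt_iff (D : Fin n → ℕ × ℕ) (i j : Fin n) :
    labelOf D j < labelOf D i ↔ okey D j < okey D i := by
  rw [← not_le, ← not_le, not_iff_not, label_le_iff]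

lemma label_pos (D : Fin n → ℕ × ℕ) (i : Fin n) : 1 ≤ labelOf D i := by
  unfold labelOf
  rw [Nat.succ_le, Finset.card_pos]
  exact ⟨i, by simp⟩

lemma label_le_n (D : Fin n → ℕ × ℕ) (i : Fin n) : labelOf D i ≤ n := by
  have := Finset.card_le_card (Finset.filter_subset
    (fun k : Fin n => okey D k ≤ okey D i) Finset.univ)
  simpa [labelOf] using this

lemma label_injective (D : Fin n → ℕ × ℕ) : Function.Injective (labelOf D) := by
  intro i j h
  apply okey_injective D
  have h1 : okey D i ≤ okey D j := (label_le_iff D j i).1 (le_of_eq h)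
  have h2 : okey D j ≤ okey D i := (label_le_iff D i j).1 (le_of_eq h.symm)
  exact le_antisymm h1 h2

noncomputable def sigmaD (D : Fin n → ℕ × ℕ) : Equiv.Perm (Fin n) :=
  Equiv.ofBijective (fun i => (⟨labelOf D i - 1, by
      have := label_pos D i; have := label_le_n D i; omega⟩ : Fin n))
    (Finite.injective_iff_bijective.mp (by
      intro i j h
      apply label_injective D
      have := label_pos D i; have := label_pos D j
      have := congrArg Fin.val h
      simp only [Fin.val_mk] at this
      omega))

lemma sigmaD_val (D : Fin n → ℕ × ℕ) (i : Fin n) :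
    (sigmaD D i : ℕ) = labelOf D i - 1 := rfl

noncomputable def betaD (D : Fin n → ℕ × ℕ) : HO n :=
  (sigmaD D, fun i => decide ((D i).1 % 2 = 0))

lemma val_betaD (D : Fin n → ℕ × ℕ) (i : Fin n) :
    HO.val (betaD D) ((i:ℕ)+1) = classifyVal D i := by
  rw [val_eq]
  unfold classifyVal betaD
  have hl := label_pos D i
  have hv : ((sigmaD D i : ℕ) : ℤ) + 1 = (labelOf D i : ℤ) := by
    rw [sigmaD_val]; omega
  rcases Nat.even_or_odd (D i).1 with he | ho
  · have h2 : (D i).1 % 2 = 0 := Nat.even_iff.mp he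
    simp only [h2, decide_eq_true_eq, if_pos, hv]
    norm_num [h2]
  · have h2 : (D i).1 % 2 = 1 := Nat.odd_iff.mp ho
    simp only [h2]
    norm_num [hv]

end Aux
namespace Aux
open HO
variable {n : ℕ}

lemma monotone_of_step {α : Type*} [Preorder α] {f : Fin n → α}
    (h : ∀ i j : Fin n, (j:ℕ) = (i:ℕ)+1 → f i ≤ f j) : Monotone f := by
  have H : ∀ k, ∀ a b : Fin n, (b:ℕ) = (a:ℕ) + k → f a ≤ f b := by
    intro k
    induction k with
    | zero => intro a b hab; have : a = b := Fin.ext (by omega); rw [this]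
    | succ r ih =>
      intro a b hab
      have hmid : (a:ℕ) + r < n := by have := b.isLt; omega
      exact le_trans (ih a ⟨(a:ℕ)+r, hmid⟩ rfl) (h ⟨(a:ℕ)+r, hmid⟩ b (by simp; omega))
  intro a b hab
  exact H ((b:ℕ) - (a:ℕ)) a b (by have := Fin.le_iff_val_le_val.mp hab; omega)

lemma strictMono_of_step {α : Type*} [Preorder α] {f : Fin n → α}
    (h : ∀ i j : Fin n, (j:ℕ) = (i:ℕ)+1 → f i < f j) : StrictMono f := by
  have H : ∀ k, ∀ a b : Fin n, (b:ℕ) = (a:ℕ) + (k+1) → f a < f b := by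
    intro k
    induction k with
    | zero => intro a b hab; exact h a b (by omega)
    | succ r ih =>
      intro a b hab
      have hmid : (a:ℕ) + (r+1) < n := by have := b.isLt; omega
      exact lt_trans (ih a ⟨(a:ℕ)+(r+1), hmid⟩ rfl) (h ⟨(a:ℕ)+(r+1), hmid⟩ b (by simp; omega))
  intro a b hab
  exact H ((b:ℕ) - (a:ℕ) - 1) a b (by have := Fin.lt_iff_val_lt_val.mp hab; omega)

/-- The forward map on raw diagrams. -/
noncomputable def Fmap (β : HO n) (m mh : Fin n → ℕ) : Fin n → ℕ × ℕ :=
  fun i => (gstat β ((i:ℕ)+1) + 2 * m i,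
            gstat (inv β) ((β.1 i : ℕ)+1) + 2 * mh (β.1 i))

lemma inv_sign (β : HO n) (i : Fin n) : (inv β).2 (β.1 i) = β.2 i := by
  simp [inv]

/-- If consecutive `g`-values are equal, then the absolute values increase. -/
lemma abs_lt_of_gstat_eq (β : HO n) (p : ℕ) (h1 : 1 ≤ p) (h2 : p ≤ n - 1)
    (h : gstat β (p+1) = gstat β p) :
    (val β p).natAbs < (val β (p+1)).natAbs := by
  have hs := gstat_step β p
  by_cases hd : p ∈ Des β
  · simp only [hd, if_true] at hs
    have := eta_le_one β p; have := eta_le_one β (p+1)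
    omega
  · simp only [hd, if_false] at hs
    exact abs_lt_of_not_des β p h1 h2 hd (by omega)

lemma beta_lt_of_gstat_eq (β : HO n) (i j : Fin n) (hji : (j:ℕ) = (i:ℕ)+1)
    (h : gstat β ((j:ℕ)+1) = gstat β ((i:ℕ)+1)) : β.1 i < β.1 j := by
  have := abs_lt_of_gstat_eq β ((i:ℕ)+1) (by omega) (by have := j.isLt; omega)
    (by rw [← hji] at h ⊢; exact h)
  rw [natAbs_val] at this
  have h2 : ((i:ℕ)+1+1) = (j:ℕ)+1 := by omega
  rw [h2, natAbs_val] at this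
  exact Fin.lt_iff_val_lt_val.mpr (by omega)

lemma Fmap_fst_monotone (β : HO n) {m : Fin n → ℕ} (hm : Monotone m) :
    Monotone (fun i => (Fmap β m mh i).1) := by
  intro i j hij
  simp only [Fmap]
  have := gstat_mono β (p := (i:ℕ)+1) (q := (j:ℕ)+1) (by omega)
    (by have := Fin.le_iff_val_le_val.mp hij; omega) (by have := j.isLt; omega)
  have := hm hij
  omega

lemma Bfun_monotone (β : HO n) {mh : Fin n → ℕ} (hmh : Monotone mh) :
    Monotone (fun k : Fin n => gstat (inv β) ((k:ℕ)+1) + 2 * mh k) := by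
  intro k l hkl
  dsimp only
  have := gstat_mono (inv β) (p := (k:ℕ)+1) (q := (l:ℕ)+1) (by omega)
    (by have := Fin.le_iff_val_le_val.mp hkl; omega) (by have := l.isLt; omega)
  have := hmh hkl
  omega

lemma Fmap_monotone (β : HO n) {m mh : Fin n → ℕ} (hm : Monotone m) (hmh : Monotone mh) :
    Monotone (fun i => toLex (Fmap β m mh i)) := by
  apply monotone_of_step
  intro i j hji
  rw [Prod.Lex.le_iff]
  have ha : (Fmap β m mh i).1 ≤ (Fmap β m mh j).1 :=
    Fmap_fst_monotone β hm (Fin.le_iff_val_le_val.mpr (by omega))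
  rcases lt_or_eq_of_le ha with h | h
  · exact Or.inl h
  · refine Or.inr ⟨h, ?_⟩
    -- the g-values and m-values must each be equal
    have hg : gstat β ((j:ℕ)+1) = gstat β ((i:ℕ)+1) := by
      have h1 := gstat_mono β (p := (i:ℕ)+1) (q := (j:ℕ)+1) (by omega) (by omega)
        (by have := j.isLt; omega)
      have h2 := hm (Fin.le_iff_val_le_val.mpr (by omega) : i ≤ j)
      simp only [Fmap] at h
      omega
    have hlt : β.1 i < β.1 j := beta_lt_of_gstat_eq β i j hji hg
    exact Bfun_monotone β hmh (le_of_lt hlt)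

lemma Fmap_parity (β : HO n) (m mh : Fin n → ℕ) (i : Fin n) :
    (((Fmap β m mh i).1 + (Fmap β m mh i).2)) % 2 = 0 := by
  have h1 : gstat β ((i:ℕ)+1) % 2 = if β.2 i then 0 else 1 := by
    rw [gstat_parity, etaStat_eq]
  have h2 : gstat (inv β) ((β.1 i : ℕ)+1) % 2 = if β.2 i then 0 else 1 := by
    rw [gstat_parity, etaStat_eq, inv_sign]
  simp only [Fmap]
  by_cases hb : β.2 i <;> simp only [hb, if_true, if_false] at h1 h2 <;> omega

lemma label_Fmap (β : HO n) {m mh : Fin n → ℕ} (hm : Monotone m) (hmh : Monotone mh)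
    (i : Fin n) : labelOf (Fmap β m mh) i = (β.1 i : ℕ) + 1 := by
  set F := Fmap β m mh with hF
  have hc : StrictMono (fun k : Fin n => okey F (β.1⁻¹ k)) := by
    apply strictMono_of_step
    intro k l hlk
    unfold okey
    rw [Prod.Lex.lt_iff]
    have hsnd : ∀ x : Fin n, (F x).2
        = gstat (inv β) ((β.1 x : ℕ)+1) + 2 * mh (β.1 x) := fun x => rfl
    have hk2 : (F (β.1⁻¹ k)).2 = gstat (inv β) ((k:ℕ)+1) + 2 * mh k := by
      rw [hsnd]; simp
    have hl2 : (F (β.1⁻¹ l)).2 = gstat (inv β) ((l:ℕ)+1) + 2 * mh l := by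
      rw [hsnd]; simp
    have hb : (F (β.1⁻¹ k)).2 ≤ (F (β.1⁻¹ l)).2 := by
      rw [hk2, hl2]
      exact Bfun_monotone β hmh (Fin.le_iff_val_le_val.mpr (by omega) : k ≤ l)
    rcases lt_or_eq_of_le hb with hlt | heq
    · exact Or.inl hlt
    · refine Or.inr ⟨heq, ?_⟩
      rw [Prod.Lex.lt_iff]
      have hg : gstat (inv β) ((l:ℕ)+1) = gstat (inv β) ((k:ℕ)+1) := by
        have h1 := gstat_mono (inv β) (p := (k:ℕ)+1) (q := (l:ℕ)+1) (by omega) (by omega)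
          (by have := l.isLt; omega)
        have h2 := hmh (Fin.le_iff_val_le_val.mpr (by omega) : k ≤ l)
        rw [hk2, hl2] at heq
        omega
      have hlt0 : β.1⁻¹ k < β.1⁻¹ l := beta_lt_of_gstat_eq (inv β) k l hlk hg
      have ha : (F (β.1⁻¹ k)).1 ≤ (F (β.1⁻¹ l)).1 :=
        Fmap_fst_monotone β hm (le_of_lt hlt0)
      rcases lt_or_eq_of_le ha with h | h
      · exact Or.inl h
      · exact Or.inr ⟨h, Fin.lt_iff_val_lt_val.mp hlt0⟩
  have hiff : ∀ i j : Fin n, okey F j ≤ okey F i ↔ β.1 j ≤ β.1 i := by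
    intro i j
    have h := hc.le_iff_le (a := β.1 j) (b := β.1 i)
    simpa [Equiv.Perm.inv_def] using h
  unfold labelOf
  have hfe : (Finset.univ.filter fun j : Fin n => okey F j ≤ okey F i)
      = Finset.univ.filter fun j : Fin n => β.1 j ≤ β.1 i := by
    apply Finset.filter_congr
    intro j _
    simpa using hiff i j
  rw [hfe]
  have hcard : (Finset.univ.filter fun j : Fin n => β.1 j ≤ β.1 i).card
      = (Finset.Iic (β.1 i)).card := by
    apply Finset.card_bij (fun a _ => β.1 a)
    · intro a ha
      simp only [Finset.mem_filter, Finset.mem_univ, true_and] at ha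
      exact Finset.mem_Iic.mpr ha
    · intro a _ b _ hab
      exact β.1.injective hab
    · intro b hb
      refine ⟨β.1⁻¹ b, ?_, by simp⟩
      simp only [Finset.mem_filter, Finset.mem_univ, true_and]
      simpa using Finset.mem_Iic.mp hb
  rw [hcard, Fin.card_Iic]

lemma classifyVal_Fmap (β : HO n) {m mh : Fin n → ℕ} (hm : Monotone m) (hmh : Monotone mh)
    (i : Fin n) : classifyVal (Fmap β m mh) i = val β ((i:ℕ)+1) := by
  unfold classifyVal
  rw [label_Fmap β hm hmh, val_eq]
  have hpar : (Fmap β m mh i).1 % 2 = if β.2 i then 0 else 1 := by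
    have h1 : gstat β ((i:ℕ)+1) % 2 = if β.2 i then 0 else 1 := by
      rw [gstat_parity, etaStat_eq]
    simp only [Fmap]
    by_cases hb : β.2 i <;> simp only [hb, if_true, if_false] at h1 ⊢ <;> omega
  by_cases hb : β.2 i = true
  · rw [if_pos hb] at hpar
    rw [if_pos hb, if_neg (by omega)]
    push_cast
    ring
  · rw [if_neg hb] at hpar
    rw [if_neg hb, if_pos (by omega)]
    push_cast
    ring

end Aux
namespace Aux
open HO
variable {n : ℕ}

lemma fst_mono {D : Fin n → ℕ × ℕ} (hmono : Monotone fun i => toLex (D i))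
    {i j : Fin n} (hij : i ≤ j) : (D i).1 ≤ (D j).1 := by
  have h := hmono hij
  rw [Prod.Lex.le_iff] at h
  rcases h with h | h
  · exact le_of_lt h
  · exact le_of_eq h.1

lemma etaD (D : Fin n → ℕ × ℕ) (i : Fin n) :
    etaStat (betaD D) ((i:ℕ)+1) = (D i).1 % 2 := by
  rw [etaStat_eq]
  unfold betaD
  by_cases h : (D i).1 % 2 = 0 <;> simp [h] <;> omega

lemma label_sigma (D : Fin n → ℕ × ℕ) (i : Fin n) :
    labelOf D i = (sigmaD D i : ℕ) + 1 := by
  rw [sigmaD_val]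
  have := label_pos D i
  omega

lemma label_sigma_inv (D : Fin n → ℕ × ℕ) (k : Fin n) :
    labelOf D ((sigmaD D)⁻¹ k) = (k:ℕ) + 1 := by
  rw [label_sigma]
  congr 1
  simp

lemma etaD_inv (D : Fin n → ℕ × ℕ) (k : Fin n) :
    etaStat (inv (betaD D)) ((k:ℕ)+1) = (D ((sigmaD D)⁻¹ k)).1 % 2 := by
  rw [etaStat_eq]
  show (if (betaD D).2 ((betaD D).1⁻¹ k) then 0 else 1) = _
  unfold betaD
  by_cases h : (D ((sigmaD D)⁻¹ k)).1 % 2 = 0 <;> simp only [Equiv.Perm.inv_def] at h <;> simp [h] <;> omega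

lemma val_inv_betaD (D : Fin n → ℕ × ℕ) (k : Fin n) :
    val (inv (betaD D)) ((k:ℕ)+1)
      = (if (D ((sigmaD D)⁻¹ k)).1 % 2 = 1 then 1 else -1) * (((sigmaD D)⁻¹ k : ℕ) + 1) := by
  rw [val_eq (inv (betaD D)) k]
  show (if (betaD D).2 ((betaD D).1⁻¹ k) then -(((((betaD D).1⁻¹ k : Fin n) : ℕ) : ℤ) + 1)
    else ((((betaD D).1⁻¹ k : Fin n) : ℕ) : ℤ) + 1) = _
  unfold betaD
  by_cases h : (D ((sigmaD D)⁻¹ k)).1 % 2 = 0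
  · rw [if_pos (by simpa [Equiv.Perm.inv_def] using h), if_neg (by omega)]
    ring
  · rw [if_neg (by simpa [Equiv.Perm.inv_def] using h), if_pos (by omega)]
    ring

/-- The `a`-coordinate step inequality for the classifying permutation. -/
lemma a_step (D : Fin n → ℕ × ℕ) (hmono : Monotone fun i => toLex (D i))
    (i j : Fin n) (hji : (j:ℕ) = (i:ℕ)+1) :
    gstat (betaD D) ((j:ℕ)+1) + (D i).1 ≤ gstat (betaD D) ((i:ℕ)+1) + (D j).1 := by
  set β' := betaD D with hβ'
  have hstep := gstat_step β' ((i:ℕ)+1)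
  rw [show (i:ℕ)+1+1 = (j:ℕ)+1 from by omega] at hstep
  have heta_i : etaStat β' ((i:ℕ)+1) = (D i).1 % 2 := etaD D i
  have heta_j : etaStat β' ((j:ℕ)+1) = (D j).1 % 2 := etaD D j
  have hfst : (D i).1 ≤ (D j).1 := fst_mono hmono (Fin.le_iff_val_le_val.mpr (by omega))
  by_cases hdes : ((i:ℕ)+1) ∈ Des β'
  · simp only [hdes, if_true] at hstep
    -- analyze the descent
    have hb := ((mem_Des_iff β' ((i:ℕ)+1)).1 hdes).2
    rw [show (i:ℕ)+1+1 = (j:ℕ)+1 from by omega, val_betaD, val_betaD] at hb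
    unfold classifyVal at hb
    have hLi := label_pos D i
    have hLj := label_pos D j
    by_cases hsign : (D i).1 % 2 = (D j).1 % 2
    · -- equal signs: labels decrease, so b decreases and a strictly increases
      have hlab : labelOf D j < labelOf D i := by
        unfold bprec at hb
        split_ifs at hb <;> simp only [one_mul, neg_mul] at hb <;> omega
      have hok : okey D j < okey D i := (label_lt_iff D i j).mp hlab
      unfold okey at hok
      rw [Prod.Lex.lt_iff] at hok
      have hread := hmono (Fin.le_iff_val_le_val.mpr (by omega : (i:ℕ) ≤ (j:ℕ)))
      rw [Prod.Lex.le_iff] at hread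
      have hblt : (D j).2 < (D i).2 := by
        rcases hok with h | ⟨h1, h2⟩
        · exact h
        · rw [Prod.Lex.lt_iff] at h2
          simp only [ofLex_toLex] at h1 h2 hread ⊢
          omega
      have halt : (D i).1 < (D j).1 := by
        rcases hread with h | ⟨h1, h2⟩
        · exact h
        · simp only [ofLex_toLex] at h1 h2
          omega
      omega
    · -- different signs: necessarily positive at i, negative at j
      have hkey : (D i).1 % 2 = 1 ∧ (D j).1 % 2 = 0 := by
        unfold bprec at hb
        split_ifs at hb <;> simp only [one_mul, neg_mul] at hb <;> omega
      omega
  · simp only [hdes, if_false] at hstep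
    omega

/-- The `b`-coordinate step inequality (along labels) for the classifying permutation. -/
lemma b_step (D : Fin n → ℕ × ℕ) (hmono : Monotone fun i => toLex (D i))
    (hpar : ∀ x, ((D x).1 + (D x).2) % 2 = 0)
    (k l : Fin n) (hlk : (l:ℕ) = (k:ℕ)+1) :
    gstat (inv (betaD D)) ((l:ℕ)+1) + (D ((sigmaD D)⁻¹ k)).2
      ≤ gstat (inv (betaD D)) ((k:ℕ)+1) + (D ((sigmaD D)⁻¹ l)).2 := by
  set β' := betaD D with hβ'
  set i0 := (sigmaD D)⁻¹ k with hi0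
  set j0 := (sigmaD D)⁻¹ l with hj0
  have hstep := gstat_step (inv β') ((k:ℕ)+1)
  rw [show (k:ℕ)+1+1 = (l:ℕ)+1 from by omega] at hstep
  have heta_k : etaStat (inv β') ((k:ℕ)+1) = (D i0).1 % 2 := etaD_inv D k
  have heta_l : etaStat (inv β') ((l:ℕ)+1) = (D j0).1 % 2 := etaD_inv D l
  have hpar_i := hpar i0
  have hpar_j := hpar j0
  -- labels: label i0 = k+1 < l+1 = label j0
  have hlab_i : labelOf D i0 = (k:ℕ)+1 := label_sigma_inv D k
  have hlab_j : labelOf D j0 = (l:ℕ)+1 := label_sigma_inv D l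
  have hok : okey D i0 < okey D j0 := by
    rw [← label_lt_iff]
    omega
  have hsnd : (D i0).2 ≤ (D j0).2 := by
    unfold okey at hok
    rw [Prod.Lex.lt_iff] at hok
    rcases hok with h | ⟨h1, _⟩
    · exact le_of_lt h
    · exact le_of_eq h1
  by_cases hdes : ((k:ℕ)+1) ∈ Des (inv β')
  · simp only [hdes, if_true] at hstep
    have hb := ((mem_Des_iff (inv β') ((k:ℕ)+1)).1 hdes).2
    rw [show (k:ℕ)+1+1 = (l:ℕ)+1 from by omega, val_inv_betaD, val_inv_betaD] at hb
    rw [← hi0, ← hj0] at hb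
    by_cases hsign : (D i0).1 % 2 = (D j0).1 % 2
    · -- equal signs: positions decrease, so b strictly increases by 2
      have hposlt : (j0:ℕ) < (i0:ℕ) := by
        unfold bprec at hb
        split_ifs at hb <;> simp only [one_mul, neg_mul] at hb <;> omega
      have hread := hmono (Fin.le_iff_val_le_val.mpr (le_of_lt hposlt) : j0 ≤ i0)
      rw [Prod.Lex.le_iff] at hread
      unfold okey at hok
      rw [Prod.Lex.lt_iff] at hok
      have hblt : (D i0).2 < (D j0).2 := by
        rcases hok with h | ⟨h1, h2⟩
        · exact h
        · rw [Prod.Lex.lt_iff] at h2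
          simp only [ofLex_toLex] at h1 h2 hread ⊢
          rcases hread with h | ⟨h3, h4⟩
          · omega
          · omega
      omega
    · -- different signs: necessarily positive at k, negative at l
      have hkey : (D i0).1 % 2 = 1 ∧ (D j0).1 % 2 = 0 := by
        unfold bprec at hb
        split_ifs at hb <;> simp only [one_mul, neg_mul] at hb <;> omega
      omega
  · simp only [hdes, if_false] at hstep
    omega

end Aux
namespace Aux
open HO
variable {n : ℕ}

noncomputable def mD (D : Fin n → ℕ × ℕ) (i : Fin n) : ℕ :=
  ((D i).1 - gstat (betaD D) ((i:ℕ)+1)) / 2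

noncomputable def mhD (D : Fin n → ℕ × ℕ) (k : Fin n) : ℕ :=
  ((D ((sigmaD D)⁻¹ k)).2 - gstat (inv (betaD D)) ((k:ℕ)+1)) / 2

lemma a_parity (D : Fin n → ℕ × ℕ) (i : Fin n) :
    (D i).1 % 2 = gstat (betaD D) ((i:ℕ)+1) % 2 := by
  rw [gstat_parity, etaD]

lemma a_lower (D : Fin n → ℕ × ℕ) (hmono : Monotone fun i => toLex (D i)) :
    ∀ v (hv : v < n), gstat (betaD D) (v+1) ≤ (D ⟨v, hv⟩).1 := by
  intro v
  induction v with
  | zero =>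
    intro hv
    have e := etaD D ⟨0, hv⟩
    have g1 := gstat_one (betaD D)
    simp only [Fin.val_mk, Nat.zero_add] at e
    simp only [Nat.zero_add]
    omega
  | succ r ih =>
    intro hv
    have hr : r < n := by omega
    have hstep := a_step D hmono ⟨r, hr⟩ ⟨r+1, hv⟩ rfl
    have hprev := ih hr
    simp only [Fin.val_mk] at hstep
    omega

lemma a_repr (D : Fin n → ℕ × ℕ) (hmono : Monotone fun i => toLex (D i)) (i : Fin n) :
    (D i).1 = gstat (betaD D) ((i:ℕ)+1) + 2 * mD D i := by
  have h1 := a_lower D hmono i.val i.isLt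
  have h2 := a_parity D i
  simp only [Fin.eta] at h1
  unfold mD
  omega

lemma mD_mono (D : Fin n → ℕ × ℕ) (hmono : Monotone fun i => toLex (D i)) :
    Monotone (mD D) := by
  apply monotone_of_step
  intro i j hji
  have h1 := a_repr D hmono i
  have h2 := a_repr D hmono j
  have h3 := a_step D hmono i j hji
  omega

lemma b_parity (D : Fin n → ℕ × ℕ) (hpar : ∀ x, ((D x).1 + (D x).2) % 2 = 0) (k : Fin n) :
    (D ((sigmaD D)⁻¹ k)).2 % 2 = gstat (inv (betaD D)) ((k:ℕ)+1) % 2 := by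
  rw [gstat_parity, etaD_inv]
  have := hpar ((sigmaD D)⁻¹ k)
  omega

lemma b_lower (D : Fin n → ℕ × ℕ) (hmono : Monotone fun i => toLex (D i))
    (hpar : ∀ x, ((D x).1 + (D x).2) % 2 = 0) :
    ∀ v (hv : v < n), gstat (inv (betaD D)) (v+1) ≤ (D ((sigmaD D)⁻¹ ⟨v, hv⟩)).2 := by
  intro v
  induction v with
  | zero =>
    intro hv
    have e := etaD_inv D ⟨0, hv⟩
    have g1 := gstat_one (inv (betaD D))
    have hp := hpar ((sigmaD D)⁻¹ ⟨0, hv⟩)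
    simp only [Fin.val_mk, Nat.zero_add] at e
    simp only [Nat.zero_add]
    omega
  | succ r ih =>
    intro hv
    have hr : r < n := by omega
    have hstep := b_step D hmono hpar ⟨r, hr⟩ ⟨r+1, hv⟩ rfl
    have hprev := ih hr
    simp only [Fin.val_mk] at hstep
    omega

lemma b_repr (D : Fin n → ℕ × ℕ) (hmono : Monotone fun i => toLex (D i))
    (hpar : ∀ x, ((D x).1 + (D x).2) % 2 = 0) (k : Fin n) :
    (D ((sigmaD D)⁻¹ k)).2 = gstat (inv (betaD D)) ((k:ℕ)+1) + 2 * mhD D k := by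
  have h1 := b_lower D hmono hpar k.val k.isLt
  have h2 := b_parity D hpar k
  simp only [Fin.eta] at h1
  unfold mhD
  omega

lemma mhD_mono (D : Fin n → ℕ × ℕ) (hmono : Monotone fun i => toLex (D i))
    (hpar : ∀ x, ((D x).1 + (D x).2) % 2 = 0) :
    Monotone (mhD D) := by
  apply monotone_of_step
  intro k l hlk
  have h1 := b_repr D hmono hpar k
  have h2 := b_repr D hmono hpar l
  have h3 := b_step D hmono hpar k l hlk
  omega

lemma Fmap_betaD (D : Fin n → ℕ × ℕ) (hmono : Monotone fun i => toLex (D i))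
    (hpar : ∀ x, ((D x).1 + (D x).2) % 2 = 0) :
    Fmap (betaD D) (mD D) (mhD D) = D := by
  funext i
  have hfst : (Fmap (betaD D) (mD D) (mhD D) i).1 = (D i).1 := (a_repr D hmono i).symm
  have hsnd : (Fmap (betaD D) (mD D) (mhD D) i).2 = (D i).2 := by
    show gstat (inv (betaD D)) ((sigmaD D i : ℕ)+1) + 2 * mhD D (sigmaD D i) = (D i).2
    have h := b_repr D hmono hpar (sigmaD D i)
    rw [Equiv.Perm.inv_def, Equiv.symm_apply_apply] at h
    exact h.symm
  exact Prod.ext hfst hsnd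

lemma sigmaD_Fmap (β : HO n) {m mh : Fin n → ℕ} (hm : Monotone m) (hmh : Monotone mh) :
    sigmaD (Fmap β m mh) = β.1 := by
  apply Equiv.ext
  intro i
  apply Fin.ext
  rw [sigmaD_val, label_Fmap β hm hmh]
  omega

lemma betaD_Fmap (β : HO n) {m mh : Fin n → ℕ} (hm : Monotone m) (hmh : Monotone mh) :
    betaD (Fmap β m mh) = β := by
  have hσ := sigmaD_Fmap β hm hmh
  have hsign : (fun i => decide ((Fmap β m mh i).1 % 2 = 0)) = β.2 := by
    funext i
    have hpar : (Fmap β m mh i).1 % 2 = if β.2 i then 0 else 1 := by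
      have h1 : gstat β ((i:ℕ)+1) % 2 = if β.2 i then 0 else 1 := by
        rw [gstat_parity, etaStat_eq]
      show (gstat β ((i:ℕ)+1) + 2 * m i) % 2 = _
      by_cases hb : β.2 i <;> simp only [hb, if_true, if_false] at h1 ⊢ <;> omega
    by_cases hb : β.2 i = true
    · rw [hb] at hpar ⊢
      simp only [if_true] at hpar
      simp [hpar]
    · have hb' : β.2 i = false := by simp at hb; exact hb
      rw [hb'] at hpar ⊢
      simp only [if_false, Bool.false_eq_true] at hpar
      simp [hpar]
  unfold betaD
  rw [hσ]
  exact Prod.ext rfl hsign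

lemma mD_Fmap (β : HO n) {m mh : Fin n → ℕ} (hm : Monotone m) (hmh : Monotone mh)
    (i : Fin n) : mD (Fmap β m mh) i = m i := by
  unfold mD
  rw [betaD_Fmap β hm hmh]
  show ((gstat β ((i:ℕ)+1) + 2 * m i) - gstat β ((i:ℕ)+1)) / 2 = m i
  omega

lemma mhD_Fmap (β : HO n) {m mh : Fin n → ℕ} (hm : Monotone m) (hmh : Monotone mh)
    (k : Fin n) : mhD (Fmap β m mh) k = mh k := by
  unfold mhD
  rw [betaD_Fmap β hm hmh, sigmaD_Fmap β hm hmh]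
  show ((gstat (inv β) ((β.1 (β.1⁻¹ k) : ℕ)+1) + 2 * mh (β.1 (β.1⁻¹ k)))
      - gstat (inv β) ((k:ℕ)+1)) / 2 = mh k
  rw [Equiv.Perm.inv_def, Equiv.apply_symm_apply]
  omega

end Aux
namespace Aux
variable {n : ℕ}

noncomputable def toMonoFun (n : ℕ) (s : Multiset ℕ) : Fin n → ℕ :=
  fun i => (s.filter fun p => n - (i:ℕ) ≤ p).card

lemma toMonoFun_mono (s : Multiset ℕ) : Monotone (toMonoFun n s) := by
  intro i j hij
  apply Multiset.card_le_card
  apply Multiset.monotone_filter_right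
  intro x hx
  have := Fin.le_iff_val_le_val.mp hij
  omega

lemma count_split (s : Multiset ℕ) (p : ℕ) :
    (s.filter fun q => p ≤ q).card = s.count p + (s.filter fun q => p+1 ≤ q).card := by
  induction s using Multiset.induction_on with
  | empty => simp
  | cons a t ih =>
    rw [Multiset.filter_cons, Multiset.filter_cons, Multiset.count_cons,
      Multiset.card_add, Multiset.card_add]
    by_cases h1 : p ≤ a
    · rw [if_pos h1]
      by_cases h2 : p+1 ≤ a
      · rw [if_pos h2, if_neg (by omega)]
        simp only [Multiset.card_singleton, Multiset.card_zero]
        omega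
      · rw [if_neg h2, if_pos (by omega)]
        simp only [Multiset.card_singleton, Multiset.card_zero]
        omega
    · rw [if_neg h1, if_neg (by omega), if_neg (by omega)]
      simp only [Multiset.card_zero]
      omega

lemma toMono_inj {s t : Multiset ℕ} (hs : ∀ x ∈ s, 1 ≤ x ∧ x ≤ n)
    (ht : ∀ x ∈ t, 1 ≤ x ∧ x ≤ n)
    (h : toMonoFun n s = toMonoFun n t) : s = t := by
  have hfil : ∀ p, 1 ≤ p →
      (s.filter fun q => p ≤ q).card = (t.filter fun q => p ≤ q).card := by
    intro p hp
    by_cases hpn : p ≤ n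
    · have hlt : n - p < n := by omega
      have := congrFun h ⟨n - p, hlt⟩
      unfold toMonoFun at this
      simpa [Nat.sub_sub_self hpn] using this
    · have hse : s.filter (fun q => p ≤ q) = 0 := by
        rw [Multiset.filter_eq_nil]
        intro x hx
        have := hs x hx
        omega
      have hte : t.filter (fun q => p ≤ q) = 0 := by
        rw [Multiset.filter_eq_nil]
        intro x hx
        have := ht x hx
        omega
      rw [hse, hte]
  apply Multiset.ext'
  intro p
  by_cases hp : 1 ≤ p
  · have h1 := count_split s p
    have h2 := count_split t p
    have h3 := hfil p hp
    have h4 := hfil (p+1) (by omega)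
    omega
  · have hp0 : p = 0 := by omega
    rw [hp0]
    rw [Multiset.count_eq_zero_of_notMem, Multiset.count_eq_zero_of_notMem]
    · intro hx; have := ht 0 hx; omega
    · intro hx; have := hs 0 hx; omega

lemma card_filter_sum {ι : Type*} (s : Finset ι) (f : ι → Multiset ℕ) (q : ℕ → Prop)
    [DecidablePred q] :
    ((∑ j ∈ s, f j).filter q).card = ∑ j ∈ s, ((f j).filter q).card := by
  induction s using Finset.cons_induction with
  | empty => simp
  | cons a s ha ih =>
    rw [Finset.sum_cons, Finset.sum_cons, Multiset.filter_add, Multiset.card_add, ih]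

/-- difference sequence -/
noncomputable def dseq (m : Fin n → ℕ) (j : Fin n) : ℕ :=
  m j - (if h : (j:ℕ) = 0 then 0 else m ⟨(j:ℕ)-1, by omega⟩)

noncomputable def funToPart (m : Fin n → ℕ) : Multiset ℕ :=
  ∑ j : Fin n, Multiset.replicate (dseq m j) (n - (j:ℕ))

lemma funToPart_mem (m : Fin n → ℕ) : ∀ x ∈ funToPart m, 1 ≤ x ∧ x ≤ n := by
  intro x hx
  rw [funToPart, Multiset.mem_sum] at hx
  obtain ⟨j, _, hj⟩ := hx
  have := Multiset.eq_of_mem_replicate hj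
  have := j.isLt
  omega

lemma sum_ite_le (f : Fin n → ℕ) (v : ℕ) (hv : v < n) :
    (∑ j : Fin n, if (j:ℕ) ≤ v then f j else 0)
      = (∑ j : Fin n, if (j:ℕ) + 1 ≤ v then f j else 0) + f ⟨v, hv⟩ := by
  have hsplit : ∀ j : Fin n, (if (j:ℕ) ≤ v then f j else 0)
      = (if (j:ℕ) + 1 ≤ v then f j else 0) + (if (j:ℕ) = v then f j else 0) := by
    intro j
    split_ifs <;> omega
  rw [Finset.sum_congr rfl (fun j _ => hsplit j), Finset.sum_add_distrib]
  congr 1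
  rw [Finset.sum_eq_single (⟨v, hv⟩ : Fin n)]
  · rw [if_pos rfl]
  · intro b _ hb
    rw [if_neg]
    intro hc
    exact hb (Fin.ext hc)
  · intro h
    exact absurd (Finset.mem_univ _) h

lemma tele (m : Fin n → ℕ) (hm : Monotone m) :
    ∀ v (hv : v < n), (∑ j : Fin n, if (j:ℕ) ≤ v then dseq m j else 0) = m ⟨v, hv⟩ := by
  intro v
  induction v with
  | zero =>
    intro hv
    rw [sum_ite_le (dseq m) 0 hv]
    have : (∑ j : Fin n, if (j:ℕ) + 1 ≤ 0 then dseq m j else 0) = 0 := by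
      apply Finset.sum_eq_zero
      intro j _
      rw [if_neg (by omega)]
    rw [this]
    unfold dseq
    rw [dif_pos rfl]
    omega
  | succ r ih =>
    intro hv
    have hr : r < n := by omega
    rw [sum_ite_le (dseq m) (r+1) hv]
    have he : (∑ j : Fin n, if (j:ℕ) + 1 ≤ r + 1 then dseq m j else 0)
        = (∑ j : Fin n, if (j:ℕ) ≤ r then dseq m j else 0) := by
      apply Finset.sum_congr rfl
      intro j _
      congr 1
      simp only [eq_iff_iff]
      omega
    rw [he, ih hr]
    show m ⟨r, hr⟩ + dseq m ⟨r+1, hv⟩ = m ⟨r+1, hv⟩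
    unfold dseq
    rw [dif_neg (by simp)]
    have h1 : (⟨(⟨r+1, hv⟩ : Fin n).val - 1, by omega⟩ : Fin n) = ⟨r, hr⟩ := by
      apply Fin.ext
      simp
    rw [h1]
    have h2 : m ⟨r, hr⟩ ≤ m ⟨r+1, hv⟩ := hm (by rw [Fin.le_iff_val_le_val]; simp)
    omega

lemma toMono_funToPart (m : Fin n → ℕ) (hm : Monotone m) :
    toMonoFun n (funToPart m) = m := by
  funext i
  unfold toMonoFun funToPart
  rw [card_filter_sum]
  have he : ∀ j : Fin n, ((Multiset.replicate (dseq m j) (n - (j:ℕ))).filter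
      fun p => n - (i:ℕ) ≤ p).card = if (j:ℕ) ≤ (i:ℕ) then dseq m j else 0 := by
    intro j
    by_cases h : n - (i:ℕ) ≤ n - (j:ℕ)
    · rw [Multiset.filter_eq_self.mpr (fun x hx => by
        have := Multiset.eq_of_mem_replicate hx; omega)]
      rw [Multiset.card_replicate, if_pos (by have := i.isLt; have := j.isLt; omega)]
    · rw [Multiset.filter_eq_nil.mpr (fun x hx => by
        have := Multiset.eq_of_mem_replicate hx; omega)]
      rw [Multiset.card_zero, if_neg (by have := i.isLt; have := j.isLt; omega)]
  rw [Finset.sum_congr rfl (fun j _ => he j), tele m hm i.val i.isLt, Fin.eta]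

lemma sum_toMonoFun (s : Multiset ℕ) (hs : ∀ x ∈ s, 1 ≤ x ∧ x ≤ n) :
    ∑ i : Fin n, toMonoFun n s i = s.sum := by
  induction s using Multiset.induction_on with
  | empty => simp [toMonoFun]
  | cons a t ih =>
    have ha := hs a (Multiset.mem_cons_self a t)
    have hn : 0 < n := by omega
    have ht : ∀ x ∈ t, 1 ≤ x ∧ x ≤ n := fun x hx => hs x (Multiset.mem_cons_of_mem hx)
    unfold toMonoFun at ih ⊢
    have he : ∀ i : Fin n, ((a ::ₘ t).filter fun p => n - (i:ℕ) ≤ p).card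
        = (t.filter fun p => n - (i:ℕ) ≤ p).card + (if n - (i:ℕ) ≤ a then 1 else 0) := by
      intro i
      rw [Multiset.filter_cons, Multiset.card_add]
      split_ifs <;> simp <;> omega
    rw [Finset.sum_congr rfl (fun i _ => he i), Finset.sum_add_distrib, ih ht,
      Multiset.sum_cons]
    have hcard : (∑ i : Fin n, if n - (i:ℕ) ≤ a then 1 else 0) = a := by
      rw [← Finset.card_filter]
      have : (Finset.univ.filter fun i : Fin n => n - (i:ℕ) ≤ a)
          = Finset.Ici (⟨n - a, by omega⟩ : Fin n) := by
        ext i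
        simp only [Finset.mem_filter, Finset.mem_univ, true_and, Finset.mem_Ici,
          Fin.le_iff_val_le_val, Fin.val_mk]
        have := i.isLt
        omega
      rw [this, Fin.card_Ici, Fin.val_mk]
      omega
    omega

noncomputable def partEquiv (n : ℕ) : PartLE n ≃ {m : Fin n → ℕ // Monotone m} where
  toFun s := ⟨toMonoFun n s.1, toMonoFun_mono s.1⟩
  invFun m := ⟨funToPart m.1, funToPart_mem m.1⟩
  left_inv s := by
    apply Subtype.ext
    apply toMono_inj (funToPart_mem _) s.2
    exact toMono_funToPart (toMonoFun n s.1) (toMonoFun_mono s.1)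
  right_inv m := by
    apply Subtype.ext
    exact toMono_funToPart m.1 m.2

lemma sum_partEquiv (s : PartLE n) : ∑ i : Fin n, ((partEquiv n s).1 i) = s.1.sum :=
  sum_toMonoFun s.1 s.2

end Aux

namespace Aux
open HO
variable {n : ℕ}

noncomputable def mainEquiv (n : ℕ) :
    HO n × {m : Fin n → ℕ // Monotone m} × {m : Fin n → ℕ // Monotone m} ≃ EDiag n where
  toFun x := ⟨Fmap x.1 x.2.1.1 x.2.2.1,
    Fmap_monotone x.1 x.2.1.2 x.2.2.2, Fmap_parity x.1 x.2.1.1 x.2.2.1⟩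
  invFun D := (betaD D.1, ⟨mD D.1, mD_mono D.1 D.2.1⟩, ⟨mhD D.1, mhD_mono D.1 D.2.1 D.2.2⟩)
  left_inv x := by
    obtain ⟨β, mm, mm'⟩ := x
    refine Prod.ext ?_ (Prod.ext ?_ ?_)
    · exact betaD_Fmap β mm.2 mm'.2
    · exact Subtype.ext (funext fun i => mD_Fmap β mm.2 mm'.2 i)
    · exact Subtype.ext (funext fun k => mhD_Fmap β mm.2 mm'.2 k)
  right_inv D := Subtype.ext (Fmap_betaD D.1 D.2.1 D.2.2)

end Aux

/-- there is a bijection `D ↔ (D_β, λ, μ)` between `n`-cell `e`-diagrams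
and triples of a compact `e`-diagram `D_β` (equivalently, of `β ∈ B_n`) and two
partitions `λ, μ` with parts at most `n`; the classifying signed permutation of the
diagram associated to `(β, λ, μ)` is `β`, and the weights satisfy
`|D| = |D_β| + 2(|λ|, |μ|)`. -/
theorem e_diagram_bijection (n : ℕ) :
    ∃ Φ : HO n × PartLE n × PartLE n ≃ EDiag n,
      ∀ (β : HO n) (lam mu : PartLE n),
        (∀ i : Fin n,
          classifyVal (Φ (β, lam, mu)).1 i = HO.val β ((i : ℕ) + 1)) ∧
        (∑ i : Fin n, ((Φ (β, lam, mu)).1 i).1)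
          = (∑ i : Fin n, (Dbeta β i).1) + 2 * lam.1.sum ∧
        (∑ i : Fin n, ((Φ (β, lam, mu)).1 i).2)
          = (∑ i : Fin n, (Dbeta β i).2) + 2 * mu.1.sum := by
  refine ⟨(Equiv.prodCongr (Equiv.refl (HO n))
    (Equiv.prodCongr (Aux.partEquiv n) (Aux.partEquiv n))).trans (Aux.mainEquiv n), ?_⟩
  intro β lam mu
  set mm := Aux.partEquiv n lam with hmm
  set mm' := Aux.partEquiv n mu with hmm'
  have happ : (((Equiv.prodCongr (Equiv.refl (HO n))
      (Equiv.prodCongr (Aux.partEquiv n) (Aux.partEquiv n))).trans (Aux.mainEquiv n))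
        (β, lam, mu)).1 = Aux.Fmap β mm.1 mm'.1 := rfl
  rw [happ]
  refine ⟨fun i => Aux.classifyVal_Fmap β mm.2 mm'.2 i, ?_, ?_⟩
  · have h1 : ∀ i : Fin n, (Aux.Fmap β mm.1 mm'.1 i).1
        = (Dbeta β i).1 + 2 * mm.1 i := fun i => rfl
    rw [Finset.sum_congr rfl (fun i _ => h1 i), Finset.sum_add_distrib, ← Finset.mul_sum,
      Aux.sum_partEquiv lam]
  · have h1 : ∀ i : Fin n, (Aux.Fmap β mm.1 mm'.1 i).2
        = HO.gstat (HO.inv β) ((β.1 i : ℕ)+1) + 2 * mm'.1 (β.1 i) := fun i => rfl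
    have h2 : ∀ i : Fin n, (Dbeta β i).2 = HO.gstat (HO.inv β) ((β.1 i : ℕ)+1) := by
      intro i
      show HO.gstat (HO.inv β) ((HO.val β ((i:ℕ)+1)).natAbs) = _
      rw [Aux.natAbs_val]
    rw [Finset.sum_congr rfl (fun i _ => h1 i), Finset.sum_add_distrib,
      Finset.sum_congr rfl (fun i _ => h2 i)]
    congr 1
    rw [← Finset.mul_sum]
    congr 1
    rw [Equiv.sum_comp β.1 (fun k => mm'.1 k), Aux.sum_partEquiv mu]
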